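/- Lemma B.3 (game values are countable ordinals): Let 𝒳_t (t ≥ 1) be Polish spaces and 𝒴_t (t ≥ 1) be countable sets, and let 𝖶 ⊆ Π_{t≥1}(𝒳_t × 𝒴_t) be finitely decidable and coanalytic. Then for every position v: if v is active and the relation ≺_v on active decision trees with starting position v is well-founded, then the rank ρ_{≺_v}(∅) of the empty tree is strictly less than ω₁ (the first uncountable ordinal). Equivalently, for every position v, either val(v) = Ω or val(v) < ω₁. -/

import Mathlib

universe u

variable {X Y : ℕ → Type u}

/-- `𝖶` is finitely decidable. -/
def FinitelyDecidable (W : Set (∀ t : ℕ, X t × Y t)) : Prop :=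
  ∀ w ∈ W, ∃ n : ℕ, ∀ w' : ∀ t : ℕ, X t × Y t, (∀ t < n, w' t = w t) → w' ∈ W

/-- A position `v` of length `n` is active: some infinite continuation avoids `𝖶`. -/
def ActivePos (W : Set (∀ t : ℕ, X t × Y t)) {n : ℕ}
    (v : ∀ s : Fin n, X s.val × Y s.val) : Prop :=
  ∃ w : ∀ t : ℕ, X t × Y t, w ∉ W ∧ ∀ s : Fin n, w s.val = v s

/-- A decision tree of depth `m` with starting position of length `k`: the node at level `j`
is labelled by a point of `𝒳_{k+j+1}` and is indexed by the `P_L`-labels along the path to it. -/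
def DTree (X Y : ℕ → Type u) (k m : ℕ) : Type u :=
  ∀ j : Fin m, ((∀ i : Fin j.val, Y (k + i.val)) → X (k + j.val))

/-- A decision tree is active if every branch leads to an active position. -/
def ActiveDTree (W : Set (∀ t : ℕ, X t × Y t)) {k : ℕ}
    (v : ∀ s : Fin k, X s.val × Y s.val) {m : ℕ} (τ : DTree X Y k m) : Prop :=
  ∀ y : ∀ j : Fin m, Y (k + j.val),
    ∃ w : ∀ t : ℕ, X t × Y t, w ∉ W ∧ (∀ s : Fin k, w s.val = v s) ∧
      ∀ j : Fin m, w (k + j.val) =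
        (τ j fun i : Fin j.val => y ⟨i.val, i.isLt.trans j.isLt⟩, y j)

/-- The relation `≺_v` on decision trees with starting position `v`: `t' ≺_v t` iff both are
active and `t` is obtained from `t'` by removing its leaves. -/
def TreePrec (W : Set (∀ t : ℕ, X t × Y t)) {k : ℕ}
    (v : ∀ s : Fin k, X s.val × Y s.val) :
    (Σ m : ℕ, DTree X Y k m) → (Σ m : ℕ, DTree X Y k m) → Prop :=
  fun t' t =>
    ActiveDTree W v t'.2 ∧ ActiveDTree W v t.2 ∧ t'.1 = t.1 + 1 ∧
      ∀ (j : ℕ) (hj : j < t.1) (hj' : j < t'.1) (y : ∀ i : Fin j, Y (k + i.val)),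
        t.2 ⟨j, hj⟩ y = t'.2 ⟨j, hj'⟩ y

/-- The empty decision tree (depth `0`). -/
def emptyDTree (X Y : ℕ → Type u) (k : ℕ) : DTree X Y k 0 := fun j => j.elim0

namespace GVaux

open Filter Topology Set

/-- level-`m` branches (with starting length `n`) -/
abbrev Br (Y : ℕ → Type u) (n m : ℕ) : Type u := ∀ i : Fin m, Y (n + i.val)

/-- finite approximation data: stage, base depth, dense approximations of tree nodes,
and finite prefixes of activity witnesses. -/
abbrev QQ (D : ℕ → Type u) : Type u :=
  Σ k : ℕ, Σ m0 : ℕ, (∀ j : Fin (m0 + k), Fin k → D j.val) × (Fin (k + 1) → Fin k → Fin k → ℕ)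

/-- the stored witness prefixes are prefixes of genuine activity witnesses, whose values
are tied to the stored node approximations. -/
def Good [∀ t, MetricSpace (X t)] (f : (ℕ → ℕ) → ∀ t, X t × Y t) {n : ℕ}
    (v : ∀ s : Fin n, X s.val × Y s.val) (e : ∀ m, ℕ → Br Y n m)
    {D : ℕ → Type u} (ι : ∀ j, D j → X (n + j)) (q : QQ D) : Prop :=
  ∀ (i b : ℕ) (hi : i < q.1 + 1) (hb : b < q.1),
    ∃ z : ℕ → ℕ,
      (∀ (l : ℕ) (hl : l < q.1), z l = q.2.2.2 ⟨i, hi⟩ ⟨b, hb⟩ ⟨l, hl⟩) ∧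
      (∀ s : Fin n, f z s.val = v s) ∧
      ∀ (j : ℕ) (hj : j < q.2.1 + i),
        (f z (n + j)).2 = e (q.2.1 + i) b ⟨j, hj⟩ ∧
        ∀ (b' : ℕ) (hb' : b' < q.1) (hj' : j < q.2.1 + q.1),
          (∀ i' : Fin j, e j b' i' = e (q.2.1 + i) b ⟨i'.val, i'.isLt.trans hj⟩) →
          dist (f z (n + j)).1 (ι j (q.2.2.1 ⟨j, hj'⟩ ⟨b', hb'⟩)) < (2 : ℝ)⁻¹ ^ q.1

/-- the countable approximation relation. -/
def Rel [∀ t, MetricSpace (X t)] (f : (ℕ → ℕ) → ∀ t, X t × Y t) {n : ℕ}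
    (v : ∀ s : Fin n, X s.val × Y s.val) (e : ∀ m, ℕ → Br Y n m)
    {D : ℕ → Type u} (ι : ∀ j, D j → X (n + j)) (q' q : QQ D) : Prop :=
  q'.1 = q.1 + 1 ∧ q'.2.1 = q.2.1 ∧ Good f v e ι q ∧ Good f v e ι q' ∧
  (∀ (j b : ℕ) (hj : j < q.2.1 + q.1) (hb : b < q.1) (hj' : j < q'.2.1 + q'.1) (hb' : b < q'.1),
      dist (ι j (q.2.2.1 ⟨j, hj⟩ ⟨b, hb⟩)) (ι j (q'.2.2.1 ⟨j, hj'⟩ ⟨b, hb'⟩))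
        ≤ (2 : ℝ)⁻¹ ^ q.1 + (2 : ℝ)⁻¹ ^ q'.1) ∧
  (∀ (i b l : ℕ) (hi : i < q.1 + 1) (hb : b < q.1) (hl : l < q.1)
      (hi' : i < q'.1 + 1) (hb' : b < q'.1) (hl' : l < q'.1),
      q.2.2.2 ⟨i, hi⟩ ⟨b, hb⟩ ⟨l, hl⟩ = q'.2.2.2 ⟨i, hi'⟩ ⟨b, hb'⟩ ⟨l, hl'⟩)

/-- finite coherent chains of active trees of increasing depths. -/
abbrev Chain (X Y : ℕ → Type u) (n : ℕ) : Type u :=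
  Σ km : ℕ × ℕ, ∀ i : Fin (km.1 + 1), DTree X Y n (km.2 + i.val)

def last {n : ℕ} (c : Chain X Y n) : Σ m : ℕ, DTree X Y n m :=
  ⟨c.1.2 + c.1.1, c.2 ⟨c.1.1, Nat.lt_succ_self _⟩⟩

/-- the simulation invariant between a genuine chain and its approximation. -/
def Sim [∀ t, MetricSpace (X t)] (W : Set (∀ t : ℕ, X t × Y t))
    {n : ℕ} (v : ∀ s : Fin n, X s.val × Y s.val)
    (f : (ℕ → ℕ) → ∀ t, X t × Y t) (e : ∀ m, ℕ → Br Y n m)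
    {D : ℕ → Type u} (ι : ∀ j, D j → X (n + j))
    (c : Chain X Y n) (q : QQ D) : Prop :=
  q.1 = c.1.1 ∧ q.2.1 = c.1.2 ∧
  (∀ i, ActiveDTree W v (c.2 i)) ∧
  (∀ (i i' : Fin (c.1.1 + 1)) (j : ℕ) (hj : j < c.1.2 + i.val) (hj' : j < c.1.2 + i'.val)
      (u : ∀ i'' : Fin j, Y (n + i''.val)), c.2 i ⟨j, hj⟩ u = c.2 i' ⟨j, hj'⟩ u) ∧
  (∀ (j b : ℕ) (hj : j < q.2.1 + q.1) (hb : b < q.1) (hj2 : j < c.1.2 + c.1.1),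
      dist (ι j (q.2.2.1 ⟨j, hj⟩ ⟨b, hb⟩)) (c.2 ⟨c.1.1, Nat.lt_succ_self _⟩ ⟨j, hj2⟩ (e j b))
        < (2 : ℝ)⁻¹ ^ q.1) ∧
  (∀ (i b : ℕ) (hi : i < q.1 + 1) (hb : b < q.1) (hi2 : i < c.1.1 + 1),
      ∃ z : ℕ → ℕ,
        (∀ (l : ℕ) (hl : l < q.1), z l = q.2.2.2 ⟨i, hi⟩ ⟨b, hb⟩ ⟨l, hl⟩) ∧
        (∀ s : Fin n, f z s.val = v s) ∧
        ∀ (j : ℕ) (hj : j < c.1.2 + i),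
          f z (n + j) = (c.2 ⟨i, hi2⟩ ⟨j, hj⟩
              (fun i' : Fin j => e (c.1.2 + i) b ⟨i'.val, i'.isLt.trans hj⟩),
            e (c.1.2 + i) b ⟨j, hj⟩))

/-- ranks over countable types are countable. -/
theorem rank_lt_omega1 {β : Type u} [Countable β] {R : β → β → Prop} (hR : WellFounded R)
    (b : β) : (hR.apply b).rank < (Cardinal.aleph 1).ord := by
  induction b using hR.induction with
  | _ b IH =>
    rw [Acc.rank_eq]
    refine Cardinal.iSup_lt_ord_of_isRegular Cardinal.isRegular_aleph_one
      (lt_of_le_of_lt Cardinal.mk_le_aleph0 Cardinal.aleph0_lt_aleph_one) ?_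
    rintro ⟨b', hb'⟩
    have h := IH b' hb'
    have hl : Order.IsSuccLimit ((Cardinal.aleph 1).ord) :=
      Cardinal.isSuccLimit_ord (le_of_lt Cardinal.aleph0_lt_aleph_one)
    exact hl.succ_lt h

/-- rank simulation lemma. -/
theorem sim_rank {α β γ : Type u} {r : α → α → Prop} {R : β → β → Prop}
    (hR : WellFounded R) (π : γ → α) (A : γ → β → Prop)
    (hsim : ∀ c q, A c q → ∀ a', r a' (π c) → ∃ c' q', π c' = a' ∧ R q' q ∧ A c' q') :
    ∀ q c, A c q → ∀ h : Acc r (π c), h.rank ≤ (hR.apply q).rank := by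
  intro q
  induction q using hR.induction with
  | _ q IH =>
    intro c hA h
    rw [Acc.rank_eq]
    refine Ordinal.iSup_le ?_
    rintro ⟨a', ha'⟩
    obtain ⟨c', q', hπ, hRq, hA'⟩ := hsim c q hA a' ha'
    subst hπ
    have h2 := IH q' hRq c' hA' (h.inv ha')
    have h3 : (hR.apply q').rank < (hR.apply q).rank := Acc.rank_lt_of_rel _ hRq
    exact Order.succ_le_of_lt (lt_of_le_of_lt h2 h3)


theorem dtree_cast_apply {n m m' : ℕ} (hmm : DTree X Y n m = DTree X Y n m') (hm : m = m')
    (τ : DTree X Y n m) (j : ℕ) (hj : j < m) (hj' : j < m')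
    (u : ∀ i : Fin j, Y (n + i.val)) :
    cast hmm τ ⟨j, hj'⟩ u = τ ⟨j, hj⟩ u := by
  subst hm; rfl

theorem dtree_cast_active {W : Set (∀ t : ℕ, X t × Y t)} {n : ℕ}
    {v : ∀ s : Fin n, X s.val × Y s.val} {m m' : ℕ}
    (hmm : DTree X Y n m = DTree X Y n m') (hm : m = m')
    {τ : DTree X Y n m} (h : ActiveDTree W v τ) : ActiveDTree W v (cast hmm τ) := by
  subst hm; exact h

theorem rel_wf [∀ t, MetricSpace (X t)] [∀ t, CompleteSpace (X t)]
    [∀ t, TopologicalSpace (Y t)] [∀ t, DiscreteTopology (Y t)]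
    (W : Set (∀ t : ℕ, X t × Y t)) {n : ℕ} (v : ∀ s : Fin n, X s.val × Y s.val)
    (f : (ℕ → ℕ) → ∀ t, X t × Y t) (hf : Continuous f) (hfr : Set.range f = Wᶜ)
    (e : ∀ m, ℕ → Br Y n m) (hcd : ∀ (j : ℕ) (u : Br Y n j), ∃ b : ℕ, e j b = u)
    {D : ℕ → Type u} (ι : ∀ j, D j → X (n + j))
    (hXne : ∀ t, Nonempty (X t))
    (hwf : WellFounded (TreePrec W v)) :
    WellFounded (Rel f v e ι) := by
  classical
  by_contra hnwf
  have hall : ¬ ∀ a, Acc (Rel f v e ι) a := fun h => hnwf ⟨h⟩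
  push_neg at hall
  obtain ⟨a0, ha0⟩ := hall
  have hFex : ∀ x : {a : QQ D // ¬Acc (Rel f v e ι) a},
      ∃ y : {a : QQ D // ¬Acc (Rel f v e ι) a}, Rel f v e ι y.1 x.1 := by
    rintro ⟨x, hx⟩
    obtain ⟨b, hb1, hb2⟩ := exists_not_acc_lt_of_not_acc hx
    exact ⟨⟨b, hb1⟩, hb2⟩
  choose F hF using hFex
  set g : ℕ → QQ D := fun p => (F^[p] ⟨a0, ha0⟩).1 with hgdef
  have hg : ∀ p, Rel f v e ι (g (p + 1)) (g p) := by
    intro p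
    simp only [hgdef, Function.iterate_succ', Function.comp_apply]
    exact hF _
  have hgk : ∀ p, (g p).1 = (g 0).1 + p := by
    intro p
    induction p with
    | zero => rfl
    | succ p ih => have h := (hg p).1; omega
  have hgm : ∀ p, (g p).2.1 = (g 0).2.1 := by
    intro p
    induction p with
    | zero => rfl
    | succ p ih => have h := (hg p).2.1; omega
  set k0 := (g 0).1 with hk0
  set m0 := (g 0).2.1 with hm0
  have x0 : ∀ t, X t := fun t => Classical.choice (hXne t)
  -- the node approximation sequences
  set ns : ∀ (j _b : ℕ), ℕ → X (n + j) := fun j b p =>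
    if h : j < (g p).2.1 + (g p).1 ∧ b < (g p).1 then ι j ((g p).2.2.1 ⟨j, h.1⟩ ⟨b, h.2⟩)
    else x0 (n + j) with hns
  have hcond : ∀ j b p, j + b + 1 ≤ p → j < (g p).2.1 + (g p).1 ∧ b < (g p).1 := by
    intro j b p h
    have h1 := hgk p; have h2 := hgm p
    constructor <;> omega
  have hnsval : ∀ (j b p : ℕ) (h : j < (g p).2.1 + (g p).1 ∧ b < (g p).1),
      ns j b p = ι j ((g p).2.2.1 ⟨j, h.1⟩ ⟨b, h.2⟩) := by
    intro j b p h
    simp only [hns]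
    exact dif_pos h
  have hpow : ∀ p q : ℕ, p ≤ q → (2 : ℝ)⁻¹ ^ q ≤ (2 : ℝ)⁻¹ ^ p := by
    intro p q h
    exact pow_le_pow_of_le_one (by norm_num) (by norm_num) h
  have hstep : ∀ j b p, j + b + 1 ≤ p →
      dist (ns j b p) (ns j b (p + 1)) ≤ 2 * (2 : ℝ)⁻¹ ^ p := by
    intro j b p hp
    have hc := hcond j b p hp
    have hc' := hcond j b (p + 1) (by omega)
    have h5 := (hg p).2.2.2.2.1 j b hc.1 hc.2 hc'.1 hc'.2
    rw [hnsval j b p hc, hnsval j b (p + 1) hc']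
    have e1 : (2 : ℝ)⁻¹ ^ (g p).1 ≤ (2 : ℝ)⁻¹ ^ p := hpow _ _ (by have := hgk p; omega)
    have e2 : (2 : ℝ)⁻¹ ^ (g (p + 1)).1 ≤ (2 : ℝ)⁻¹ ^ p := hpow _ _ (by have := hgk (p + 1); omega)
    calc dist (ι j ((g p).2.2.1 ⟨j, hc.1⟩ ⟨b, hc.2⟩)) (ι j ((g (p + 1)).2.2.1 ⟨j, hc'.1⟩ ⟨b, hc'.2⟩))
        ≤ (2 : ℝ)⁻¹ ^ (g p).1 + (2 : ℝ)⁻¹ ^ (g (p + 1)).1 := h5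
      _ ≤ 2 * (2 : ℝ)⁻¹ ^ p := by linarith
  have hcauchy : ∀ j b, ∃ x, Filter.Tendsto (fun p => ns j b p) Filter.atTop (nhds x) := by
    intro j b
    have hCS : CauchySeq (fun p => ns j b (p + (j + b + 1))) := by
      apply cauchySeq_of_le_geometric (2 : ℝ)⁻¹ (2 * (2 : ℝ)⁻¹ ^ (j + b + 1)) (by norm_num)
      intro p
      have h1 := hstep j b (p + (j + b + 1)) (by omega)
      have h2 : p + 1 + (j + b + 1) = p + (j + b + 1) + 1 := by omega
      rw [h2]
      calc dist (ns j b (p + (j + b + 1))) (ns j b (p + (j + b + 1) + 1))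
          ≤ 2 * (2 : ℝ)⁻¹ ^ (p + (j + b + 1)) := h1
        _ = 2 * (2 : ℝ)⁻¹ ^ (j + b + 1) * (2 : ℝ)⁻¹ ^ p := by rw [pow_add]; ring
    obtain ⟨x, hx⟩ := cauchySeq_tendsto_of_complete hCS
    exact ⟨x, (Filter.tendsto_add_atTop_iff_nat (j + b + 1)).1 hx⟩
  choose xlim hxlim using hcauchy
  choose cd hcd' using hcd
  -- the reconstructed trees
  set T : ∀ i : ℕ, DTree X Y n (m0 + i) := fun i =>
    fun j u => xlim j.val (cd j.val u) with hT
  have hGood : ∀ p, Good f v e ι (g p) := fun p => (hg p).2.2.1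
  choose zG hz1 hz2 hz3 using hGood
  have hAct : ∀ i : ℕ, ActiveDTree W v (T i) := by
    intro i y
    set b0 := cd (m0 + i) y with hb0
    have hy : e (m0 + i) b0 = y := hcd' _ y
    set P0 := i + b0 + 1 with hP0
    have hvalid : ∀ p, P0 ≤ p → i < (g p).1 + 1 ∧ b0 < (g p).1 := by
      intro p hp
      have := hgk p
      omega
    set zp : ℕ → ℕ → ℕ := fun p =>
      if h : i < (g p).1 + 1 ∧ b0 < (g p).1 then zG p i b0 h.1 h.2 else fun _ => 0 with hzp
    have hzpval : ∀ (p : ℕ) (h : i < (g p).1 + 1 ∧ b0 < (g p).1),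
        zp p = zG p i b0 h.1 h.2 := by
      intro p h
      simp only [hzp]
      exact dif_pos h
    have hpiv : ∀ l : ℕ, i < (g (P0 + l)).1 + 1 ∧ b0 < (g (P0 + l)).1 ∧ l < (g (P0 + l)).1 := by
      intro l
      have := hgk (P0 + l)
      omega
    set zinf : ℕ → ℕ := fun l =>
      (g (P0 + l)).2.2.2 ⟨i, (hpiv l).1⟩ ⟨b0, (hpiv l).2.1⟩ ⟨l, (hpiv l).2.2⟩ with hzinf
    have hstab : ∀ (l p : ℕ), P0 + l ≤ p → ∀ (h1 : i < (g p).1 + 1) (h2 : b0 < (g p).1)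
        (h3 : l < (g p).1), (g p).2.2.2 ⟨i, h1⟩ ⟨b0, h2⟩ ⟨l, h3⟩ = zinf l := by
      intro l p hp
      induction p, hp using Nat.le_induction with
      | base => intro h1 h2 h3; rfl
      | succ p hp ih =>
        intro h1 h2 h3
        have hv : i < (g p).1 + 1 ∧ b0 < (g p).1 ∧ l < (g p).1 := by
          have := hgk p; omega
        have h6 := (hg p).2.2.2.2.2 i b0 l hv.1 hv.2.1 hv.2.2 h1 h2 h3
        rw [← h6]
        exact ih hv.1 hv.2.1 hv.2.2
    have hztend : Filter.Tendsto zp Filter.atTop (nhds zinf) := by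
      rw [tendsto_pi_nhds]
      intro l
      have hev : ∀ᶠ p in Filter.atTop, zinf l = zp p l := by
        filter_upwards [Filter.eventually_ge_atTop (P0 + l)] with p hp
        have hval := hvalid p (by omega)
        have hl : l < (g p).1 := by have := hgk p; omega
        rw [hzpval p hval, hz1 p i b0 hval.1 hval.2 l hl]
        exact (hstab l p hp _ _ _).symm
      exact (tendsto_const_nhds : Filter.Tendsto (fun _ => zinf l) _ _).congr' hev
    have hftend : Filter.Tendsto (fun p => f (zp p)) Filter.atTop (nhds (f zinf)) :=
      (hf.tendsto zinf).comp hztend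
    refine ⟨f zinf, ?_, ?_, ?_⟩
    · have hmem : f zinf ∈ Set.range f := ⟨zinf, rfl⟩
      rw [hfr] at hmem
      exact hmem
    · intro s
      have h1 : Filter.Tendsto (fun p => f (zp p) s.val) Filter.atTop (nhds (f zinf s.val)) :=
        ((continuous_apply s.val).tendsto _).comp hftend
      have h2 : ∀ᶠ p in Filter.atTop, f (zp p) s.val = v s := by
        filter_upwards [Filter.eventually_ge_atTop P0] with p hp
        have hval := hvalid p hp
        rw [hzpval p hval]
        exact hz2 p i b0 hval.1 hval.2 s
      exact tendsto_nhds_unique (h1.congr' h2) tendsto_const_nhds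
    · intro j
      have hji : j.val < m0 + i := j.isLt
      set u : ∀ i' : Fin j.val, Y (n + i'.val) := fun i' => y ⟨i'.val, i'.isLt.trans j.isLt⟩ with hu
      set bs := cd j.val u with hbs
      have hbsu : e j.val bs = u := hcd' _ u
      set P1 := P0 + (j.val + bs + 1) with hP1
      have htie : ∀ᶠ p in atTop, dist ((f (zp p) (n + j.val)).1) (ns j.val bs p) ≤ (2:ℝ)⁻¹ ^ p := by
        filter_upwards [eventually_ge_atTop P1] with p hp
        have hval := hvalid p (by omega)
        have hji' : j.val < (g p).2.1 + i := by have := hgm p; omega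
        have hbs' : bs < (g p).1 := by have := hgk p; omega
        have hjq : j.val < (g p).2.1 + (g p).1 := by
          have := hgm p; have := hgk p; omega
        have hmatch : ∀ i' : Fin j.val,
            e j.val bs i' = e ((g p).2.1 + i) b0 ⟨i'.val, i'.isLt.trans hji'⟩ := by
          intro i'
          have keym : ∀ (m : ℕ), m = m0 → ∀ (hj2 : j.val < m + i),
              e (m + i) b0 ⟨i'.val, i'.isLt.trans hj2⟩ = e j.val bs i' := by
            intro m hm
            subst hm
            intro hj2
            rw [hy, hbsu]
          exact (keym _ (hgm p) hji').symm
        have h5 := (hz3 p i b0 hval.1 hval.2 j.val hji').2 bs hbs' hjq hmatch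
        rw [hzpval p hval, hnsval j.val bs p ⟨hjq, hbs'⟩]
        refine le_trans (le_of_lt h5) ?_
        exact hpow _ _ (by have := hgk p; omega)
      have hX : Filter.Tendsto (fun p => (f (zp p) (n + j.val)).1) atTop (nhds (xlim j.val bs)) := by
        rw [tendsto_iff_dist_tendsto_zero]
        have hb1 : Filter.Tendsto (fun p => dist ((f (zp p) (n + j.val)).1) (ns j.val bs p))
            atTop (nhds 0) := by
          apply squeeze_zero' (Filter.Eventually.of_forall fun p => dist_nonneg) htie
          exact tendsto_pow_atTop_nhds_zero_of_lt_one (by norm_num) (by norm_num)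
        have hb2 : Filter.Tendsto (fun p => dist (ns j.val bs p) (xlim j.val bs))
            atTop (nhds 0) := tendsto_iff_dist_tendsto_zero.1 (hxlim j.val bs)
        have hb3 := hb1.add hb2
        rw [add_zero] at hb3
        exact squeeze_zero' (Filter.Eventually.of_forall fun p => dist_nonneg)
          (Filter.Eventually.of_forall fun p => dist_triangle _ _ _) hb3
      have hXeq : (f zinf (n + j.val)).1 = xlim j.val bs := by
        have h1 : Filter.Tendsto (fun p => (f (zp p) (n + j.val)).1) atTop
            (nhds ((f zinf (n + j.val)).1)) :=
          (continuous_fst.tendsto _).comp (((continuous_apply (n + j.val)).tendsto _).comp hftend)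
        exact tendsto_nhds_unique h1 hX
      have hYev : ∀ᶠ p in atTop, (f (zp p) (n + j.val)).2 = y j := by
        filter_upwards [eventually_ge_atTop P0] with p hp
        have hval := hvalid p hp
        have hji' : j.val < (g p).2.1 + i := by have := hgm p; omega
        have h6 := (hz3 p i b0 hval.1 hval.2 j.val hji').1
        rw [hzpval p hval, h6]
        have keym : ∀ (m : ℕ), m = m0 → ∀ (hj2 : j.val < m + i),
            e (m + i) b0 ⟨j.val, hj2⟩ = y j := by
          intro m hm; subst hm; intro hj2; rw [hy]
        exact keym _ (hgm p) hji'
      have hYeq : (f zinf (n + j.val)).2 = y j := by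
        have h1 : Filter.Tendsto (fun p => (f (zp p) (n + j.val)).2) atTop
            (nhds ((f zinf (n + j.val)).2)) :=
          (continuous_snd.tendsto _).comp (((continuous_apply (n + j.val)).tendsto _).comp hftend)
        exact tendsto_nhds_unique (h1.congr' hYev) tendsto_const_nhds
      exact Prod.ext hXeq hYeq
  have hchain : ∀ i : ℕ,
      TreePrec W v ⟨m0 + (i + 1), T (i + 1)⟩ (⟨m0 + i, T i⟩ : Σ m : ℕ, DTree X Y n m) := by
    intro i
    exact ⟨hAct (i + 1), hAct i, rfl, fun j hj hj' u => rfl⟩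
  have key : ∀ x : Σ m : ℕ, DTree X Y n m, Acc (TreePrec W v) x →
      ∀ i : ℕ, x = ⟨m0 + i, T i⟩ → False := by
    intro x hx
    induction hx with
    | intro x hx IH =>
      intro i hxi
      refine IH ⟨m0 + (i + 1), T (i + 1)⟩ ?_ (i + 1) rfl
      rw [hxi]
      exact hchain i
  exact key _ (hwf.apply _) 0 rfl

theorem sim_step [∀ t, MetricSpace (X t)] (W : Set (∀ t : ℕ, X t × Y t))
    {n : ℕ} (v : ∀ s : Fin n, X s.val × Y s.val)
    (f : (ℕ → ℕ) → ∀ t, X t × Y t) (hfr : Set.range f = Wᶜ)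
    (e : ∀ m, ℕ → Br Y n m) (he : ∀ m, Function.Surjective (e m))
    {D : ℕ → Type u} (ι : ∀ j, D j → X (n + j))
    (hdense : ∀ (j : ℕ) (x : X (n + j)) (ε : ℝ), 0 < ε → ∃ d : D j, dist x (ι j d) < ε) :
    ∀ (c : Chain X Y n) (q : QQ D), Sim W v f e ι c q →
      ∀ t', TreePrec W v t' (last c) →
      ∃ c' q', last c' = t' ∧ Rel f v e ι q' q ∧ Sim W v f e ι c' q' := by
  rintro ⟨⟨kc, mc⟩, T⟩ ⟨k, m0, nd, pre⟩ hSim ⟨m', τ⟩ hprec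
  obtain ⟨hk1, hm1, hS3, hS4, hS5, hS6⟩ := hSim
  have hk1' : k = kc := hk1
  have hm1' : m0 = mc := hm1
  subst hk1'; subst hm1'
  obtain ⟨hAτ, hAlast, hd, hagree⟩ := hprec
  have hd' : m' = m0 + k + 1 := hd
  subst hd'
  dsimp only [last] at hS3 hS4 hS5 hS6 hagree hAlast hAτ
  -- the extended family of trees
  set T' : ∀ i : Fin (k + 1 + 1), DTree X Y n (m0 + i.val) := fun i =>
    if h : i.val < k + 1 then T ⟨i.val, h⟩
    else cast (congrArg (DTree X Y n) (by omega : m0 + k + 1 = m0 + i.val)) τ with hT'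
  -- everything agrees with τ on shared nodes
  have hshare' : ∀ (i : Fin (k + 1 + 1)) (j : ℕ) (hj : j < m0 + i.val) (hjτ : j < m0 + k + 1)
      (u : ∀ i'' : Fin j, Y (n + i''.val)), T' i ⟨j, hj⟩ u = τ ⟨j, hjτ⟩ u := by
    intro i j hj hjτ u
    by_cases h : i.val < k + 1
    · have h1 : T' i = T ⟨i.val, h⟩ := by rw [hT']; exact dif_pos h
      have hjk : j < m0 + k := by omega
      rw [h1]
      have h2 := hS4 ⟨i.val, h⟩ ⟨k, Nat.lt_succ_self _⟩ j hj hjk u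
      rw [h2]
      exact hagree j hjk hjτ u
    · have h1 : T' i = cast (congrArg (DTree X Y n) (by omega : m0 + k + 1 = m0 + i.val)) τ := by
        rw [hT']; exact dif_neg h
      rw [h1]
      exact dtree_cast_apply _ (by omega) τ j hjτ hj u
  have hAct' : ∀ i : Fin (k + 1 + 1), ActiveDTree W v (T' i) := by
    intro i
    by_cases h : i.val < k + 1
    · have h1 : T' i = T ⟨i.val, h⟩ := by rw [hT']; exact dif_pos h
      rw [h1]; exact hS3 _
    · have h1 : T' i = cast (congrArg (DTree X Y n) (by omega : m0 + k + 1 = m0 + i.val)) τ := by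
        rw [hT']; exact dif_neg h
      rw [h1]
      exact dtree_cast_active _ (by omega) hAτ
  -- fresh witnesses for all trees and all branch codes
  have hwit : ∀ (i : Fin (k + 1 + 1)) (b : ℕ), ∃ z : ℕ → ℕ,
      (∀ s : Fin n, f z s.val = v s) ∧
      ∀ (j : ℕ) (hj : j < m0 + i.val),
        f z (n + j) = (T' i ⟨j, hj⟩
            (fun i' : Fin j => e (m0 + i.val) b ⟨i'.val, i'.isLt.trans hj⟩),
          e (m0 + i.val) b ⟨j, hj⟩) := by
    intro i b
    obtain ⟨w, hwW, hwv, hwnode⟩ := hAct' i (e (m0 + i.val) b)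
    have hwr : w ∈ Set.range f := by rw [hfr]; exact hwW
    obtain ⟨z, hz⟩ := hwr
    subst hz
    refine ⟨z, hwv, ?_⟩
    intro j hj
    exact hwnode ⟨j, hj⟩
  choose zN hzN1 hzN2 using hwit
  choose zS hzS1 hzS2 hzS3 using hS6
  -- the combined witnesses
  set Z : ∀ (_ : Fin (k + 1 + 1)) (_ : ℕ), ℕ → ℕ := fun i b =>
    if h : i.val < k + 1 ∧ b < k then zS i.val b h.1 h.2 h.1 else zN i b with hZ
  have hZv : ∀ i b (s : Fin n), f (Z i b) s.val = v s := by
    intro i b s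
    rw [hZ]; dsimp only
    split
    · exact hzS2 _ _ _ _ _ s
    · exact hzN1 _ _ s
  have hZnode : ∀ (i : Fin (k + 1 + 1)) (b : ℕ) (j : ℕ) (hj : j < m0 + i.val),
      f (Z i b) (n + j) = (T' i ⟨j, hj⟩
          (fun i' : Fin j => e (m0 + i.val) b ⟨i'.val, i'.isLt.trans hj⟩),
        e (m0 + i.val) b ⟨j, hj⟩) := by
    intro i b j hj
    rw [hZ]; dsimp only
    split
    · next h =>
      have h1 : T' i = T ⟨i.val, h.1⟩ := by rw [hT']; exact dif_pos h.1
      rw [h1]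
      exact hzS3 i.val b h.1 h.2 h.1 j hj
    · exact hzN2 _ _ j hj
  have hZpre : ∀ (i : Fin (k + 1 + 1)) (b : ℕ) (hb : b < k) (hi : i.val < k + 1)
      (l : ℕ) (hl : l < k), Z i b l = pre ⟨i.val, hi⟩ ⟨b, hb⟩ ⟨l, hl⟩ := by
    intro i b hb hi l hl
    rw [hZ]; dsimp only
    rw [dif_pos ⟨hi, hb⟩]
    exact hzS1 i.val b hi hb hi l hl
  -- new node approximations
  have hnd : ∀ (j : Fin (m0 + (k + 1))) (b : Fin (k + 1)), ∃ d : D j.val,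
      dist (τ ⟨j.val, j.isLt⟩ (e j.val b)) (ι j.val d) < (2 : ℝ)⁻¹ ^ (k + 1) := by
    intro j b
    exact hdense _ _ _ (by positivity)
  choose nd' hnd' using hnd
  -- assemble
  refine ⟨⟨(k + 1, m0), T'⟩, ⟨k + 1, m0, fun j b => nd' j b, fun i b l => Z i b l.val⟩,
    ?_, ?_, ?_⟩
  · -- last c' = t'
    show (⟨m0 + (k + 1), T' ⟨k + 1, Nat.lt_succ_self _⟩⟩ : Σ m : ℕ, DTree X Y n m) = ⟨m0 + k + 1, τ⟩
    have h1 : T' ⟨k + 1, Nat.lt_succ_self _⟩ =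
        cast (congrArg (DTree X Y n) (by omega : m0 + k + 1 = m0 + (k+1))) τ := by
      rw [hT']; exact dif_neg (lt_irrefl _)
    rw [h1]
    have h2 : cast (congrArg (DTree X Y n) (by omega : m0 + k + 1 = m0 + (k+1))) τ = τ :=
      cast_eq_iff_heq.mpr HEq.rfl
    exact congrArg (fun t => (⟨m0 + k + 1, t⟩ : Σ m : ℕ, DTree X Y n m)) h2
  · -- Rel q' q
    refine ⟨rfl, rfl, ?_, ?_, ?_, ?_⟩
    · -- Good q
      intro i b hi hb
      refine ⟨zS i b hi hb hi, hzS1 i b hi hb hi, hzS2 i b hi hb hi, ?_⟩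
      intro j hj
      constructor
      · have := hzS3 i b hi hb hi j hj
        exact congrArg Prod.snd this
      · intro b' hb' hj' hmatch
        have h1 : (f (zS i b hi hb hi) (n + j)).1 =
            T ⟨i, hi⟩ ⟨j, hj⟩ (fun i' : Fin j => e (m0 + i) b ⟨i'.val, i'.isLt.trans hj⟩) :=
          congrArg Prod.fst (hzS3 i b hi hb hi j hj)
        have hjk : j < m0 + k := hj'
        have h2 : (fun i' : Fin j => e (m0 + i) b ⟨i'.val, i'.isLt.trans hj⟩) = e j b' := by
          funext i'
          exact (hmatch i').symm
        have h3 := hS5 j b' hjk hb' hjk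
        have h4 := hS4 ⟨i, hi⟩ ⟨k, Nat.lt_succ_self _⟩ j hj hjk
          (fun i' : Fin j => e (m0 + i) b ⟨i'.val, i'.isLt.trans hj⟩)
        show dist (f (zS i b hi hb hi) (n + j)).1 (ι j (nd ⟨j, hjk⟩ ⟨b', hb'⟩)) < (2:ℝ)⁻¹ ^ k
        rw [h1, h4, h2, dist_comm]
        exact h3
    · -- Good q'
      intro i b hi hb
      refine ⟨Z ⟨i, hi⟩ b, fun l hl => rfl, hZv ⟨i, hi⟩ b, ?_⟩
      intro j hj
      constructor
      · exact congrArg Prod.snd (hZnode ⟨i, hi⟩ b j hj)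
      · intro b' hb' hj' hmatch
        have h1 : (f (Z ⟨i, hi⟩ b) (n + j)).1 =
            T' ⟨i, hi⟩ ⟨j, hj⟩ (fun i' : Fin j => e (m0 + i) b ⟨i'.val, i'.isLt.trans hj⟩) :=
          congrArg Prod.fst (hZnode ⟨i, hi⟩ b j hj)
        have hi0 : i < k + 1 + 1 := hi
        have hj0 : j < m0 + i := hj
        have hjτ : j < m0 + k + 1 := by omega
        have hj'0 : j < m0 + (k + 1) := hj'
        have hb'0 : b' < k + 1 := hb'
        have h2 : (fun i' : Fin j => e (m0 + i) b ⟨i'.val, i'.isLt.trans hj⟩) = e j b' := by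
          funext i'
          exact (hmatch i').symm
        have h3 := hshare' ⟨i, hi⟩ j hj hjτ
          (fun i' : Fin j => e (m0 + i) b ⟨i'.val, i'.isLt.trans hj⟩)
        show dist (f (Z ⟨i, hi⟩ b) (n + j)).1 (ι j (nd' ⟨j, hj'0⟩ ⟨b', hb'0⟩)) < (2:ℝ)⁻¹ ^ (k+1)
        rw [h1, h3, h2]
        exact hnd' ⟨j, hj'0⟩ ⟨b', hb'0⟩
    · -- nd coherence
      intro j b hj hb hj' hb'
      have hj0 : j < m0 + k := hj
      have hb0 : b < k := hb
      have hj'0 : j < m0 + (k + 1) := hj'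
      have hb'0 : b < k + 1 := hb'
      have hjτ : j < m0 + k + 1 := by omega
      have h1 := hS5 j b hj0 hb0 hj0
      have h2 := hagree j hj0 hjτ (e j b)
      rw [h2] at h1
      have h3 := hnd' ⟨j, hj'0⟩ ⟨b, hb'0⟩
      show dist (ι j (nd ⟨j, hj0⟩ ⟨b, hb0⟩)) (ι j (nd' ⟨j, hj'0⟩ ⟨b, hb'0⟩))
        ≤ (2 : ℝ)⁻¹ ^ k + (2 : ℝ)⁻¹ ^ (k + 1)
      calc dist (ι j (nd ⟨j, hj0⟩ ⟨b, hb0⟩)) (ι j (nd' ⟨j, hj'0⟩ ⟨b, hb'0⟩))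
          ≤ dist (ι j (nd ⟨j, hj0⟩ ⟨b, hb0⟩)) (τ ⟨j, hjτ⟩ (e j b))
            + dist (τ ⟨j, hjτ⟩ (e j b)) (ι j (nd' ⟨j, hj'0⟩ ⟨b, hb'0⟩)) := dist_triangle _ _ _
        _ ≤ (2 : ℝ)⁻¹ ^ k + (2 : ℝ)⁻¹ ^ (k + 1) := add_le_add h1.le h3.le
    · -- pre coherence
      intro i b l hi hb hl hi' hb' hl'
      exact (hZpre ⟨i, hi'⟩ b hb hi l hl).symm
  · -- Sim c' q'
    refine ⟨rfl, rfl, hAct', ?_, ?_, ?_⟩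
    · intro i i' j hj hj' u
      have hj0 : j < m0 + i.val := hj
      have hj'0 : j < m0 + i'.val := hj'
      have hik : i.val < k + 1 + 1 := i.isLt
      have hjτ : j < m0 + k + 1 := by omega
      show T' i ⟨j, hj0⟩ u = T' i' ⟨j, hj'0⟩ u
      rw [hshare' i j hj0 hjτ u, hshare' i' j hj'0 hjτ u]
    · intro j b hj hb hj2
      have hj0 : j < m0 + (k + 1) := hj
      have hb0 : b < k + 1 := hb
      have hj20 : j < m0 + (k + 1) := hj2
      have h1 := hshare' ⟨k + 1, Nat.lt_succ_self _⟩ j hj20 (by omega : j < m0 + k + 1) (e j b)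
      show dist (ι j (nd' ⟨j, hj0⟩ ⟨b, hb0⟩))
        (T' ⟨k + 1, Nat.lt_succ_self _⟩ ⟨j, hj20⟩ (e j b)) < (2:ℝ)⁻¹ ^ (k + 1)
      rw [h1, dist_comm]
      exact hnd' ⟨j, hj0⟩ ⟨b, hb0⟩
    · intro i b hi hb hi2
      refine ⟨Z ⟨i, hi⟩ b, fun l hl => rfl, hZv ⟨i, hi⟩ b, ?_⟩
      intro j hj
      exact hZnode ⟨i, hi⟩ b j hj

end GVaux

open GVaux

/-- **Lemma B.3 (game values are countable ordinals).** Let `𝒳_t` be Polish, `𝒴_t` countable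
discrete, and `𝖶` finitely decidable and coanalytic. For every active position `v` such that
the relation `≺_v` on active decision trees is well-founded, the rank of the empty tree is
strictly less than `ω₁` (the first uncountable ordinal); equivalently, every position has game
value `Ω` or a countable ordinal. -/
theorem game_value_countable
    [∀ t, TopologicalSpace (X t)] [∀ t, PolishSpace (X t)]
    [∀ t, TopologicalSpace (Y t)] [∀ t, DiscreteTopology (Y t)] [∀ t, Countable (Y t)]
    (W : Set (∀ t : ℕ, X t × Y t))
    (hfd : FinitelyDecidable W) (hco : MeasureTheory.AnalyticSet Wᶜ)
    {n : ℕ} (v : ∀ s : Fin n, X s.val × Y s.val)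
    (hact : ActivePos W v) (hwf : WellFounded (TreePrec W v)) :
    (hwf.apply (⟨0, emptyDTree X Y n⟩ : Σ m : ℕ, DTree X Y n m)).rank <
      (Cardinal.aleph 1).ord := by
  classical
  obtain ⟨w₀, hw₀, hw₀v⟩ := hact
  have hXne : ∀ t, Nonempty (X t) := fun t => ⟨(w₀ t).1⟩
  have hYne : ∀ t, Nonempty (Y t) := fun t => ⟨(w₀ t).2⟩
  obtain ⟨f, hf, hfr⟩ : ∃ f : (ℕ → ℕ) → ∀ t, X t × Y t, Continuous f ∧ Set.range f = Wᶜ := by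
    rw [MeasureTheory.AnalyticSet] at hco
    rcases hco with h | h
    · exact absurd (h ▸ hw₀ : w₀ ∈ (∅ : Set _)) (by simp)
    · exact h
  letI : ∀ t, TopologicalSpace.UpgradedIsCompletelyMetrizableSpace (X t) := fun t => TopologicalSpace.upgradeIsCompletelyMetrizable (X t)
  have hS : ∀ t, ∃ s : Set (X t), s.Countable ∧ Dense s := fun t =>
    TopologicalSpace.exists_countable_dense _
  choose S hSc hSd using hS
  let D : ℕ → Type u := fun j => ↥(S (n + j))
  haveI : ∀ j, Countable (D j) := fun j => (hSc (n + j)).to_subtype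
  let ι : ∀ j, D j → X (n + j) := fun j d => d.1
  have hdense : ∀ (j : ℕ) (x : X (n + j)) (ε : ℝ), 0 < ε → ∃ d : D j, dist x (ι j d) < ε := by
    intro j x ε hε
    obtain ⟨y, hy, hxy⟩ := (hSd (n + j)).exists_dist_lt x hε
    exact ⟨⟨y, hy⟩, hxy⟩
  haveI : ∀ m, Nonempty (Br Y n m) := fun m => ⟨fun i => Classical.choice (hYne _)⟩
  have hE : ∀ m, ∃ e : ℕ → Br Y n m, Function.Surjective e := fun m =>
    exists_surjective_nat _
  choose e he using hE
  -- Monster 1: the approximation relation is well-founded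
  have hRwf : WellFounded (Rel (X := X) (Y := Y) f v e ι) :=
    rel_wf W v f hf hfr e (fun j u => he j u) ι hXne hwf
  -- Monster 2: the simulation step
  have hstep : ∀ (c : Chain X Y n) (q : QQ D), Sim W v f e ι c q →
      ∀ t', TreePrec W v t' (last c) →
      ∃ c' q', last c' = t' ∧ Rel f v e ι q' q ∧ Sim W v f e ι c' q' :=
    sim_step W v f hfr e he ι hdense
  -- base objects
  let c₀ : Chain X Y n :=
    ⟨(0, 0), fun i => match i with
      | ⟨0, _⟩ => emptyDTree X Y n⟩
  let q₀ : QQ D := ⟨0, 0, fun j => j.elim0, fun _ b => b.elim0⟩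
  have hSim0 : Sim W v f e ι c₀ q₀ := by
    refine ⟨rfl, rfl, ?_, ?_, ?_, ?_⟩
    · rintro ⟨i, hi⟩
      match i, hi with
      | 0, _ =>
        intro y
        exact ⟨w₀, hw₀, hw₀v, fun j => j.elim0⟩
    · rintro ⟨i, hi⟩ ⟨i', hi'⟩ j hj hj' u
      match i, hi, i', hi' with
      | 0, _, 0, _ => rfl
    · intro j b hj hb; exact absurd hb (Nat.not_lt_zero b)
    · intro i b hi hb; exact absurd hb (Nat.not_lt_zero b)
  have hle := sim_rank hRwf last (Sim W v f e ι) hstep q₀ c₀ hSim0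
    (hwf.apply (⟨0, emptyDTree X Y n⟩ : Σ m : ℕ, DTree X Y n m))
  exact lt_of_le_of_lt hle (rank_lt_omega1 hRwf q₀)
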